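/- Let M be the Coxeter matrix of affine type G̃_2 on the index set {0,1,2}: the Coxeter graph is the path 0 — 1 — 2, where the edge {0,1} has label 6 and the edge {1,2} has label 3 (diagonal entries of M are 1, M 0 2 = M 2 0 = 2). Then every word in the generators with the intervening neighbours property is reduced. -/

import Mathlib

/-- A word `w` in the alphabet `B` has the *intervening neighbours* property with respect to
the Coxeter matrix `M` if any two occurrences of the same letter are separated by all of its
neighbours in the Coxeter graph of `M` (two distinct letters `s`, `t` being neighbours when
`M s t ≠ 2`). -/
def HasInterveningNeighbours {B : Type*} (M : CoxeterMatrix B) (w : List B) : Prop :=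
  ∀ (i j : ℕ) (hi : i < w.length) (hj : j < w.length), i < j →
    w.get ⟨i, hi⟩ = w.get ⟨j, hj⟩ →
    ∀ t : B, t ≠ w.get ⟨i, hi⟩ → M t (w.get ⟨i, hi⟩) ≠ 2 →
      ∃ (k : ℕ) (hk : k < w.length), i < k ∧ k < j ∧ w.get ⟨k, hk⟩ = t

/-- The Coxeter matrix of affine type G̃₂ on the index set `{0, 1, 2}`: the Coxeter graph is the path `0 — 1 — 2`, where the edge `{0, 1}` has label `6` and the edge `{1, 2}` has label `3`. -/
def CoxeterMatrixAffineG2 : CoxeterMatrix (Fin 3) where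
  M := Matrix.of fun i j : Fin 3 =>
    if i = j then 1
    else if min (i : ℕ) (j : ℕ) = 0 ∧ max (i : ℕ) (j : ℕ) = 1 then 6
    else if min (i : ℕ) (j : ℕ) = 1 ∧ max (i : ℕ) (j : ℕ) = 2 then 3
    else 2
  isSymm := by
    unfold Matrix.IsSymm
    ext i j
    simp only [Matrix.transpose_apply, Matrix.of_apply]
    rcases eq_or_ne i j with rfl | h
    · simp
    · rw [if_neg h.symm, if_neg h, min_comm, max_comm]
  diagonal := by intro i; simp
  off_diagonal := by
    intro i i' h
    simp only [Matrix.of_apply, if_neg h]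
    split_ifs <;> omega

namespace AffineG2INP
open Matrix

abbrev R3 : Type := ℤ√((3:ℕ):ℤ)

instance : Zsqrtd.Nonsquare 3 :=
  ⟨by intro n; rcases n with _|_|n <;> simp <;> nlinarith⟩

abbrev V3 : Type := Fin 3 → R3

def SM : Fin 3 → Matrix (Fin 3) (Fin 3) R3 :=
  ![!![-1, ⟨0,1⟩, 0; 0, 1, 0; 0, 0, 1],
    !![1, 0, 0; ⟨0,1⟩, -1, 1; 0, 0, 1],
    !![1, 0, 0; 0, 1, 0; 0, 1, -1]]

def ee : Fin 3 → V3 := ![![1,0,0], ![0,1,0], ![0,0,1]]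
def dl : V3 := ![⟨0,1⟩, 2, 1]
def sdl : V3 := ![3, ⟨0,2⟩, ⟨0,1⟩]
def hd : Fin 12 → V3 :=
  ![![0,0,1], ![0,1,0], ![0,1,1], ![⟨0,1⟩,1,0], ![⟨0,1⟩,1,1], ![⟨0,1⟩,2,0],
    ![1,0,0], ![1,⟨0,1⟩,0], ![1,⟨0,1⟩,⟨0,1⟩], ![2,⟨0,1⟩,0], ![2,⟨0,1⟩,⟨0,1⟩], ![2,⟨0,2⟩,⟨0,1⟩]]
def Dv : Fin 12 → V3 := fun i => if (i:ℕ) < 6 then dl else sdl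

abbrev St : Type := Bool × Bool × Bool

def stepSt (s : St) (t : Fin 3) : St :=
  if t = 0 then (true, s.2.1, s.2.2)
  else if t = 2 then (s.1, true, s.2.2)
  else (false, false, true)

def allowedSt (s : St) (t : Fin 3) : Bool :=
  if t = 0 then !s.1
  else if t = 2 then !s.2.1
  else (!s.2.2 || (s.1 && s.2.1))

def Fam : St → List (Fin 12)
  | (false, false, false) => [0,1,2,3,4,5,6,7,8,9,10,11]
  | (false, false, true) => [0,3,4,6,10]
  | (false, true, false) => [1,2,3,4,5,6,7,9,11]
  | (false, true, true) => [3,4,5,6,9]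
  | (true, false, false) => [0,1,2,5,7,8,11]
  | (true, false, true) => [0,1,2,8,11]
  | (true, true, false) => [1,2,5,7,11]
  | (true, true, true) => [1,2,5,7,11]

def etIdx : Fin 3 → Fin 12 := ![6,1,0]

def sg : Fin 3 → Fin 12 → Bool :=
  ![![true,true,true,true,true,true,false,true,true,true,true,true],
    ![true,false,true,true,true,true,true,true,true,true,true,true],
    ![false,true,true,true,true,true,true,true,true,true,true,true]]
def tj : Fin 3 → Fin 12 → Fin 12 :=
  ![![0,3,4,1,2,5,6,9,10,7,8,6],
    ![2,1,0,5,1,3,7,6,8,9,11,10],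
    ![0,2,1,4,3,0,6,8,7,10,9,11]]
def tq : Fin 3 → Fin 12 → ℕ :=
  ![![0,0,0,0,0,0,0,0,0,0,0,1],
    ![0,0,0,0,1,0,0,0,0,0,0,0],
    ![0,0,0,0,0,1,0,0,0,0,0,0]]
def ng : Fin 12 → Fin 12 := ![5,4,3,2,1,0,11,10,9,8,7,6]

set_option maxRecDepth 40000

theorem sm_invol : ∀ t, SM t * SM t = 1 := by decide
theorem sm_dl : ∀ t, SM t *ᵥ dl = dl := by decide
theorem sm_sdl : ∀ t, SM t *ᵥ sdl = sdl := by decide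
theorem sm_Dv (t : Fin 3) (i : Fin 12) : SM t *ᵥ Dv i = Dv i := by
  unfold Dv; split
  · exact sm_dl t
  · exact sm_sdl t

theorem tbl_pos : ∀ t i, sg t i = true →
    SM t *ᵥ hd i = hd (tj t i) + (tq t i : R3) • Dv (tj t i) ∧ Dv (tj t i) = Dv i := by decide

theorem tbl_neg : ∀ t i, sg t i = false → hd i = ee t := by decide

theorem sm_ee : ∀ t, SM t *ᵥ ee t = -ee t := by decide

theorem neg_tbl : ∀ i, (-(hd i)) + Dv i = hd (ng i) ∧ Dv (ng i) = Dv i := by decide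

theorem hd_nonneg : ∀ i c, 0 ≤ hd i c := by decide
theorem Dv_pos : ∀ i c, 0 < Dv i c := by decide
theorem hd_ne_zero : ∀ i, ∃ c, 0 < hd i c := by decide
theorem hd_unit : ∀ (i : Fin 12) (t : Fin 3), (∀ c, c ≠ t → hd i c = 0) → hd i = ee t := by decide

theorem hd_et : ∀ t, hd (etIdx t) = ee t := by decide

theorem state_closure : ∀ (s : St) (t : Fin 3), allowedSt s t = true →
    etIdx t ∈ Fam s ∧ ∀ i ∈ Fam (stepSt s t), sg t i = true ∧ tj t i ∈ Fam s := by decide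

theorem smrow (t c : Fin 3) (h : c ≠ t) (v : V3) : (SM t *ᵥ v) c = v c := by
  fin_cases t <;> fin_cases c <;>
    simp_all [SM, Matrix.mulVec, dotProduct, Fin.sum_univ_three]

/-! ### positive roots -/

def Pos (v : V3) : Prop := ∃ (i : Fin 12) (k : ℕ), v = hd i + (k : R3) • Dv i

theorem pos_nonneg {v : V3} (hv : Pos v) (c : Fin 3) : 0 ≤ v c := by
  obtain ⟨i, k, rfl⟩ := hv
  have : (0:R3) ≤ (k : R3) * Dv i c :=
    mul_nonneg (by positivity) (Dv_pos i c).le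
  have h2 := hd_nonneg i c
  simpa [Pi.add_apply, Pi.smul_apply, smul_eq_mul] using add_nonneg h2 this

theorem pos_ne_zero {v : V3} (hv : Pos v) : v ≠ 0 := by
  obtain ⟨i, k, rfl⟩ := hv
  obtain ⟨c, hc⟩ := hd_ne_zero i
  intro h
  have := congrFun h c
  have h2 : (0:R3) ≤ (k : R3) * Dv i c := mul_nonneg (by positivity) (Dv_pos i c).le
  simp only [Pi.add_apply, Pi.smul_apply, smul_eq_mul, Pi.zero_apply] at this
  nlinarith [hc, h2]

theorem pos_disj {v : V3} (h1 : Pos v) (h2 : Pos (-v)) : False := by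
  apply pos_ne_zero h1
  funext c
  have a1 := pos_nonneg h1 c
  have a2 := pos_nonneg h2 c
  simp only [Pi.neg_apply] at a2
  have : v c = 0 := le_antisymm (by linarith) a1
  simpa using this

theorem pos_ee (t : Fin 3) : Pos (ee t) := ⟨etIdx t, 0, by simp [hd_et]⟩

theorem pos_smul_step {v : V3} (t : Fin 3) (hv : Pos v) :
    Pos (SM t *ᵥ v) ∨ Pos (-(SM t *ᵥ v)) := by
  obtain ⟨i, k, rfl⟩ := hv
  have hlin : SM t *ᵥ (hd i + (k:R3) • Dv i) = (SM t *ᵥ hd i) + (k:R3) • Dv i := by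
    rw [Matrix.mulVec_add, Matrix.mulVec_smul, sm_Dv]
  by_cases hs : sg t i = true
  · obtain ⟨h1, h2⟩ := tbl_pos t i hs
    left
    refine ⟨tj t i, tq t i + k, ?_⟩
    rw [hlin, h1, h2]
    push_cast
    rw [add_smul]
    abel
  · have he : hd i = ee t := tbl_neg t i (by simpa using hs)
    rw [hlin, he, sm_ee]
    rcases k with _ | m
    · right
      simpa using pos_ee t
    · left
      obtain ⟨h1, h2⟩ := neg_tbl i
      refine ⟨ng i, m, ?_⟩
      rw [h2, ← h1, he]
      push_cast
      rw [add_smul]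
      simp only [one_smul, neg_smul]
      abel

theorem pos_flip {v : V3} (t : Fin 3) (h1 : Pos v) (h2 : Pos (-(SM t *ᵥ v))) : v = ee t := by
  have hc : ∀ c, c ≠ t → v c = 0 := by
    intro c hct
    have a1 := pos_nonneg h1 c
    have a2 := pos_nonneg h2 c
    rw [Pi.neg_apply, smrow t c hct] at a2
    linarith
  obtain ⟨i, k, hv⟩ := h1
  have hz : ∀ c, c ≠ t → hd i c = 0 ∧ (k:R3) * Dv i c = 0 := by
    intro c hct
    have := hc c hct
    rw [hv] at this
    simp only [Pi.add_apply, Pi.smul_apply, smul_eq_mul] at this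
    constructor
    · nlinarith [hd_nonneg i c, mul_nonneg (show (0:R3) ≤ (k:R3) by positivity) (Dv_pos i c).le]
    · nlinarith [hd_nonneg i c, mul_nonneg (show (0:R3) ≤ (k:R3) by positivity) (Dv_pos i c).le]
  have hex : ∀ t' : Fin 3, ∃ c : Fin 3, c ≠ t' := by decide
  obtain ⟨c, hct⟩ := hex t
  have kz : (k : R3) = 0 := by
    rcases mul_eq_zero.mp (hz c hct).2 with h | h
    · exact h
    · exact absurd h (Dv_pos i c).ne'
  have hu : hd i = ee t := hd_unit i t (fun c' hct' => (hz c' hct').1)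
  rw [hv, kz, hu]
  simp

/-! ### words, runs, and roots -/

def Mw (u : List (Fin 3)) : Matrix (Fin 3) (Fin 3) R3 := (u.map SM).prod

@[simp] theorem Mw_nil : Mw [] = 1 := rfl

theorem Mw_cons (t : Fin 3) (u : List (Fin 3)) : Mw (t :: u) = SM t * Mw u := by
  simp [Mw]

theorem Mw_concat (u : List (Fin 3)) (t : Fin 3) : Mw (u ++ [t]) = Mw u * SM t := by
  simp [Mw]

theorem Mw_Dv (u : List (Fin 3)) (i : Fin 12) : Mw u *ᵥ Dv i = Dv i := by
  induction u with
  | nil => simp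
  | cons r u ih => rw [Mw_cons, ← Matrix.mulVec_mulVec, ih, sm_Dv]

def InState (s : St) (v : V3) : Prop :=
  ∃ i ∈ Fam s, ∃ (k : ℕ), v = hd i + (k : R3) • Dv i

theorem instate_pos {s : St} {v : V3} (h : InState s v) : Pos v := by
  obtain ⟨i, _, k, hk⟩ := h
  exact ⟨i, k, hk⟩

theorem instate_step {s : St} {t : Fin 3} {v : V3} (ha : allowedSt s t = true)
    (h : InState (stepSt s t) v) : InState s (SM t *ᵥ v) := by
  obtain ⟨i, hi, k, rfl⟩ := h
  obtain ⟨hsg, hmem⟩ := (state_closure s t ha).2 i hi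
  obtain ⟨h1, h2⟩ := tbl_pos t i hsg
  refine ⟨tj t i, hmem, tq t i + k, ?_⟩
  rw [Matrix.mulVec_add, Matrix.mulVec_smul, sm_Dv, h1, h2]
  push_cast
  rw [add_smul]
  abel

def Run : St → List (Fin 3) → Prop
  | _, [] => True
  | s, t :: u => allowedSt s t = true ∧ Run (stepSt s t) u

theorem root_mem : ∀ (u : List (Fin 3)) (s : St) (t : Fin 3), Run s (u ++ [t]) →
    InState s (Mw u *ᵥ ee t) := by
  intro u
  induction u with
  | nil =>
    intro s t hr
    obtain ⟨ha, -⟩ := hr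
    refine ⟨etIdx t, (state_closure s t ha).1, 0, ?_⟩
    simp [hd_et]
  | cons r u ih =>
    intro s t hr
    obtain ⟨ha, hr⟩ := hr
    have := instate_step ha (ih (stepSt s r) t hr)
    rwa [Matrix.mulVec_mulVec, ← Mw_cons] at this

/-! ### the inversion set and its cardinality -/

def Inv (u : List (Fin 3)) : Set V3 := {v | Pos v ∧ Pos (-(Mw u *ᵥ v))}

noncomputable def nu (u : List (Fin 3)) : ℕ := (Inv u).ncard

theorem inv_finite (u : List (Fin 3)) : (Inv u).Finite := by
  have hbnd : ∀ i : Fin 12, ∃ n : ℕ, ∀ k : ℕ,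
      (hd i + (k : R3) • Dv i) ∈ Inv u → k ≤ n := by
    intro i
    obtain ⟨n, hn⟩ := Zsqrtd.le_arch (-((Mw u *ᵥ hd i) 0))
    refine ⟨n, fun k hk => ?_⟩
    obtain ⟨-, hneg⟩ := hk
    have h0 := pos_nonneg hneg 0
    rw [Pi.neg_apply, Matrix.mulVec_add, Matrix.mulVec_smul, Mw_Dv] at h0
    simp only [Pi.add_apply, Pi.smul_apply, smul_eq_mul] at h0
    have hD : (1 : R3) ≤ Dv i 0 := by
      have := Dv_pos i 0
      fin_cases i <;> simp_all [Dv, dl, sdl] <;> decide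
    have hk1 : (k : R3) ≤ (k : R3) * Dv i 0 := by
      nlinarith [show (0:R3) ≤ (k:R3) by positivity]
    have : (k : R3) ≤ (n : R3) := by
      calc (k:R3) ≤ (k : R3) * Dv i 0 := hk1
        _ ≤ -((Mw u *ᵥ hd i) 0) := by linarith
        _ ≤ (n : R3) := hn
    exact_mod_cast this
  choose f hf using hbnd
  classical
  have : Inv u ⊆ ⋃ i : Fin 12, (fun k : ℕ => hd i + (k : R3) • Dv i) '' (Set.Iic (f i)) := by
    intro v hv
    obtain ⟨i, k, rfl⟩ := hv.1
    exact Set.mem_iUnion.mpr ⟨i, ⟨k, hf i k hv, rfl⟩⟩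
  exact Set.Finite.subset (Set.finite_iUnion (fun i => (Set.finite_Iic (f i)).image _)) this

theorem smvec_invol (t : Fin 3) (v : V3) : SM t *ᵥ (SM t *ᵥ v) = v := by
  rw [Matrix.mulVec_mulVec, sm_invol]
  simp

theorem smvec_inj (t : Fin 3) : Function.Injective (fun v : V3 => SM t *ᵥ v) :=
  Function.LeftInverse.injective (g := fun v : V3 => SM t *ᵥ v) (fun v => smvec_invol t v)

theorem nu_nil : nu [] = 0 := by
  have : Inv [] = ∅ := by
    ext v
    simp only [Inv, Set.mem_setOf_eq, Set.mem_empty_iff_false, iff_false]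
    rintro ⟨h1, h2⟩
    rw [Mw_nil, Matrix.one_mulVec] at h2
    exact pos_disj h1 h2
  simp [nu, this]

theorem nu_upper (u : List (Fin 3)) (t : Fin 3) : nu (u ++ [t]) ≤ nu u + 1 := by
  have hsub : Inv (u ++ [t]) ⊆ ((fun v : V3 => SM t *ᵥ v) '' (Inv u)) ∪ {ee t} := by
    intro v hv
    obtain ⟨h1, h2⟩ := hv
    rw [Mw_concat, ← Matrix.mulVec_mulVec] at h2
    rcases pos_smul_step t h1 with hp | hn
    · left
      exact ⟨SM t *ᵥ v, ⟨hp, h2⟩, smvec_invol t v⟩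
    · right
      simp [pos_flip t h1 hn]
  calc nu (u ++ [t]) ≤ (((fun v : V3 => SM t *ᵥ v) '' (Inv u)) ∪ {ee t}).ncard :=
        Set.ncard_le_ncard hsub (Set.Finite.union ((inv_finite u).image _) (Set.finite_singleton _))
    _ ≤ ((fun v : V3 => SM t *ᵥ v) '' (Inv u)).ncard + ({ee t} : Set V3).ncard :=
        Set.ncard_union_le _ _
    _ ≤ nu u + 1 := by
        rw [Set.ncard_singleton]
        exact Nat.add_le_add_right (Set.ncard_image_le (inv_finite u)) 1

theorem nu_lower (u : List (Fin 3)) (t : Fin 3) (hpos : Pos (Mw u *ᵥ ee t)) :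
    nu u + 1 ≤ nu (u ++ [t]) := by
  have himg : ∀ v ∈ Inv u, (SM t *ᵥ v) ∈ Inv (u ++ [t]) := by
    intro v hv
    obtain ⟨h1, h2⟩ := hv
    have hp : Pos (SM t *ᵥ v) := by
      rcases pos_smul_step t h1 with hp | hn
      · exact hp
      · exfalso
        have := pos_flip t h1 hn
        subst this
        exact pos_disj hpos h2
    refine ⟨hp, ?_⟩
    rw [Mw_concat, ← Matrix.mulVec_mulVec, smvec_invol]
    exact h2
  have het : ee t ∈ Inv (u ++ [t]) := by
    refine ⟨pos_ee t, ?_⟩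
    rw [Mw_concat, ← Matrix.mulVec_mulVec, sm_ee, Matrix.mulVec_neg, neg_neg]
    exact hpos
  have hdisj : Disjoint ((fun v : V3 => SM t *ᵥ v) '' (Inv u)) ({ee t} : Set V3) := by
    rw [Set.disjoint_singleton_right]
    rintro ⟨v, hv, hveq⟩
    have : v = SM t *ᵥ ee t := by rw [← hveq, smvec_invol]
    rw [sm_ee] at this
    subst this
    exact pos_disj (pos_ee t) hv.1
  have hsub : ((fun v : V3 => SM t *ᵥ v) '' (Inv u)) ∪ {ee t} ⊆ Inv (u ++ [t]) := by
    rintro v (⟨w, hw, rfl⟩ | hv)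
    · exact himg w hw
    · rcases hv with rfl
      exact het
  calc nu u + 1
      = ((fun v : V3 => SM t *ᵥ v) '' (Inv u)).ncard + ({ee t} : Set V3).ncard := by
        rw [Set.ncard_singleton, Set.ncard_image_of_injective _ (smvec_inj t)]; rfl
    _ = (((fun v : V3 => SM t *ᵥ v) '' (Inv u)) ∪ {ee t}).ncard :=
        (Set.ncard_union_eq hdisj ((inv_finite u).image _) (Set.finite_singleton _)).symm
    _ ≤ nu (u ++ [t]) := Set.ncard_le_ncard hsub (inv_finite (u ++ [t]))

theorem nu_le_len (u : List (Fin 3)) : nu u ≤ u.length := by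
  induction u using List.reverseRecOn with
  | nil => simp [nu_nil]
  | append_singleton u t ih =>
    have := nu_upper u t
    simp only [List.length_append, List.length_singleton]
    omega

/-! ### the intervening neighbours property and the automaton -/

abbrev INP (w : List (Fin 3)) : Prop := HasInterveningNeighbours CoxeterMatrixAffineG2 w

theorem INP_prefix {u v : List (Fin 3)} (h : INP (u ++ v)) : INP u := by
  intro i j hi hj hij heq t ht hM
  have hi' : i < (u ++ v).length := by rw [List.length_append]; omega
  have hj' : j < (u ++ v).length := by rw [List.length_append]; omega
  have e1 : (u ++ v).get ⟨i, hi'⟩ = u.get ⟨i, hi⟩ := by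
    simp only [List.get_eq_getElem]
    exact List.getElem_append_left hi
  have e2 : (u ++ v).get ⟨j, hj'⟩ = u.get ⟨j, hj⟩ := by
    simp only [List.get_eq_getElem]
    exact List.getElem_append_left hj
  obtain ⟨k, hk, hik, hkj, hkt⟩ := h i j hi' hj' hij (by rw [e1, e2, heq]) t
    (by rwa [e1]) (by rwa [e1])
  have hku : k < u.length := by omega
  refine ⟨k, hku, hik, hkj, ?_⟩
  rw [← hkt]
  simp only [List.get_eq_getElem]
  exact (List.getElem_append_left hku).symm

/-- the last-occurrence automaton component: `pst a u = true` iff `u` contains an occurrence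
of `a` which is not followed by any later occurrence of `1`. -/
def pst (a : Fin 3) (u : List (Fin 3)) : Bool :=
  u.foldl (fun st t => if t = a then true else if t = 1 then false else st) false

def stateOf (u : List (Fin 3)) : St := (pst 0 u, pst 2 u, pst 1 u)

theorem pst_concat (a : Fin 3) (u : List (Fin 3)) (t : Fin 3) :
    pst a (u ++ [t]) = if t = a then true else if t = 1 then false else pst a u := by
  simp [pst, List.foldl_append]

theorem stateOf_concat (u : List (Fin 3)) (t : Fin 3) :
    stateOf (u ++ [t]) = stepSt (stateOf u) t := by
  fin_cases t <;>
    simp [stateOf, pst_concat, stepSt] <;> decide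

theorem pst_spec (a : Fin 3) (u : List (Fin 3)) :
    pst a u = true ↔ ∃ (i : ℕ) (h : i < u.length), u[i] = a ∧
      ∀ (k : ℕ) (hk : k < u.length), i < k → u[k] ≠ 1 := by
  induction u using List.reverseRecOn with
  | nil => simp [pst]
  | append_singleton u t ih =>
    rw [pst_concat]
    by_cases hta : t = a
    · subst hta
      rw [if_pos rfl]
      constructor
      · intro _
        refine ⟨u.length, by simp, List.getElem_concat_length rfl _, ?_⟩
        intro k hk hlt
        simp only [List.length_append, List.length_singleton] at hk
        omega
      · intro _; rfl
    · rw [if_neg hta]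
      by_cases ht1 : t = 1
      · subst ht1
        rw [if_pos rfl]
        constructor
        · intro hfalse; exact absurd hfalse (by simp)
        · rintro ⟨i, hlen, hgeti, hafter⟩
          exfalso
          simp only [List.length_append, List.length_singleton] at hlen
          by_cases hi : i < u.length
          · exact hafter u.length (by simp) hi (List.getElem_concat_length rfl _)
          · have : i = u.length := by omega
            subst this
            rw [List.getElem_concat_length rfl _] at hgeti
            exact hta hgeti
      · rw [if_neg ht1, ih]
        constructor
        · rintro ⟨i, hlen, hgeti, hafter⟩
          refine ⟨i, by simp; omega, ?_, ?_⟩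
          · rw [List.getElem_append_left hlen]; exact hgeti
          · intro k hk hik
            simp only [List.length_append, List.length_singleton] at hk
            by_cases hku : k < u.length
            · rw [List.getElem_append_left hku]
              exact hafter k hku hik
            · have : k = u.length := by omega
              subst this
              rw [List.getElem_concat_length rfl _]
              exact ht1
        · rintro ⟨i, hlen, hgeti, hafter⟩
          simp only [List.length_append, List.length_singleton] at hlen
          by_cases hi : i < u.length
          · refine ⟨i, hi, ?_, ?_⟩
            · rw [List.getElem_append_left hi] at hgeti; exact hgeti
            · intro k hk hik
              have := hafter k (by simp; omega) hik
              rwa [List.getElem_append_left hk] at this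
          · exfalso
            have : i = u.length := by omega
            subst this
            rw [List.getElem_concat_length rfl _] at hgeti
            exact hta hgeti

theorem M_val_10 : (CoxeterMatrixAffineG2 1 0 : ℕ) ≠ 2 := by decide
theorem M_val_12 : (CoxeterMatrixAffineG2 1 2 : ℕ) ≠ 2 := by decide
theorem M_val_01 : (CoxeterMatrixAffineG2 0 1 : ℕ) ≠ 2 := by decide
theorem M_val_21 : (CoxeterMatrixAffineG2 2 1 : ℕ) ≠ 2 := by decide

theorem allowed_of_INP {u : List (Fin 3)} {t : Fin 3} (h : INP (u ++ [t])) :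
    allowedSt (stateOf u) t = true := by
  have hlen : u.length < (u ++ [t]).length := by simp
  have hget : (u ++ [t]).get ⟨u.length, hlen⟩ = t := by
    simp only [List.get_eq_getElem]
    exact List.getElem_concat_length rfl _
  have main : ∀ a : Fin 3, a = t → (1:Fin 3) ≠ a → (CoxeterMatrixAffineG2 1 a : ℕ) ≠ 2 →
      pst a u = false := by
    intro a hat h1a hMa
    by_contra hp
    rw [Bool.not_eq_false, pst_spec] at hp
    obtain ⟨i, hi, hgeti, hafter⟩ := hp
    have hi' : i < (u ++ [t]).length := by simp; omega
    have e1 : (u ++ [t]).get ⟨i, hi'⟩ = a := by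
      simp only [List.get_eq_getElem]
      rw [List.getElem_append_left hi]; exact hgeti
    obtain ⟨k, hk, hik, hklt, hkget⟩ :=
      h i u.length hi' hlen hi (by rw [e1, hget, hat]) 1 (by rw [e1]; exact h1a)
        (by rw [e1]; exact hMa)
    have hku : k < u.length := hklt
    apply hafter k hku hik
    rw [← hkget]
    simp only [List.get_eq_getElem]
    exact (List.getElem_append_left hku).symm
  rcases (by decide : ∀ x : Fin 3, x = 0 ∨ x = 1 ∨ x = 2) t with rfl | rfl | rfl
  · have := main 0 rfl (by decide) M_val_10
    simp [allowedSt, stateOf, this]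
  · simp only [allowedSt, stateOf]
    rw [if_neg (by decide : (1:Fin 3) ≠ 0), if_neg (by decide : (1:Fin 3) ≠ 2)]
    simp only [Bool.or_eq_true, Bool.and_eq_true]
    by_cases hp : pst 1 u = true
    swap
    · left; simp [Bool.not_eq_true] at hp ⊢; exact hp
    · right
      rw [pst_spec] at hp
      obtain ⟨i, hi, hgeti, hafter⟩ := hp
      have hi' : i < (u ++ [(1:Fin 3)]).length := by simp; omega
      have e1 : (u ++ [(1:Fin 3)]).get ⟨i, hi'⟩ = 1 := by
        simp only [List.get_eq_getElem]
        rw [List.getElem_append_left hi]; exact hgeti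
      have key : ∀ a : Fin 3, a ≠ (1:Fin 3) → (CoxeterMatrixAffineG2 a 1 : ℕ) ≠ 2 →
          pst a u = true := by
        intro a ha hMa
        obtain ⟨k, hk, hik, hklt, hkget⟩ :=
          h i u.length hi' hlen hi (by rw [e1, hget]) a (by rw [e1]; exact ha)
            (by rw [e1]; exact hMa)
        have hku : k < u.length := hklt
        rw [pst_spec]
        refine ⟨k, hku, ?_, ?_⟩
        · rw [← hkget]
          simp only [List.get_eq_getElem]
          exact (List.getElem_append_left hku).symm
        · intro m hm hkm
          exact hafter m hm (lt_trans hik hkm)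
      exact ⟨key 0 (by decide) M_val_01, key 2 (by decide) M_val_21⟩
  · have := main 2 rfl (by decide) M_val_12
    simp [allowedSt, stateOf, this]

/-! ### runs of the automaton -/

theorem run_concat (s : St) (u : List (Fin 3)) (t : Fin 3) :
    Run s u → allowedSt (u.foldl stepSt s) t = true → Run s (u ++ [t]) := by
  induction u generalizing s with
  | nil => intro _ ha; exact ⟨ha, trivial⟩
  | cons r u ih => rintro ⟨har, hr⟩ ha; exact ⟨har, ih _ hr ha⟩

theorem stateOf_eq_foldl (u : List (Fin 3)) :
    stateOf u = u.foldl stepSt (false, false, false) := by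
  induction u using List.reverseRecOn with
  | nil => rfl
  | append_singleton u t ih => rw [stateOf_concat, List.foldl_append, ih]; rfl

theorem INP_run {w : List (Fin 3)} (h : INP w) : Run (false, false, false) w := by
  induction w using List.reverseRecOn with
  | nil => trivial
  | append_singleton u t ih =>
    refine run_concat _ u t (ih (INP_prefix h)) ?_
    rw [← stateOf_eq_foldl]
    exact allowed_of_INP h

theorem key_pos {u : List (Fin 3)} {t : Fin 3} (h : INP (u ++ [t])) :
    Pos (Mw u *ᵥ ee t) :=
  instate_pos (root_mem u (false, false, false) t (INP_run h))

theorem len_le_nu {w : List (Fin 3)} (h : INP w) : w.length ≤ nu w := by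
  induction w using List.reverseRecOn with
  | nil => simp
  | append_singleton u t ih =>
    have h1 := ih (INP_prefix h)
    have h2 := nu_lower u t (key_pos h)
    simp only [List.length_append, List.length_singleton]
    omega

/-! ### the lift to the matrix monoid -/

theorem liftable : CoxeterMatrix.IsLiftable CoxeterMatrixAffineG2 SM := by
  unfold CoxeterMatrix.IsLiftable
  decide

noncomputable def phi : CoxeterMatrixAffineG2.Group →* Matrix (Fin 3) (Fin 3) R3 :=
  CoxeterMatrixAffineG2.toCoxeterSystem.lift ⟨SM, liftable⟩

theorem phi_wordProd (u : List (Fin 3)) :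
    phi (CoxeterMatrixAffineG2.toCoxeterSystem.wordProd u) = Mw u := by
  rw [CoxeterSystem.wordProd, map_list_prod, List.map_map, Mw]
  exact congrArg List.prod
    (List.map_congr_left fun a _ =>
      CoxeterSystem.lift_apply_simple CoxeterMatrixAffineG2.toCoxeterSystem liftable a)

end AffineG2INP

open AffineG2INP in
theorem INP_isReduced {w : List (Fin 3)}
    (hw : HasInterveningNeighbours CoxeterMatrixAffineG2 w) :
    CoxeterMatrixAffineG2.toCoxeterSystem.IsReduced w := by
  obtain ⟨v, hvlen, hvprod⟩ :=
    CoxeterMatrixAffineG2.toCoxeterSystem.exists_reduced_word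
      (CoxeterMatrixAffineG2.toCoxeterSystem.wordProd w)
  have hM : Mw w = Mw v := by
    rw [← phi_wordProd w, ← phi_wordProd v, ← hvprod]
  have h1 : w.length ≤ nu w := len_le_nu hw
  have h2 : nu w = nu v := by unfold AffineG2INP.nu AffineG2INP.Inv; rw [hM]
  have h3 := nu_le_len v
  have h4 := CoxeterMatrixAffineG2.toCoxeterSystem.length_wordProd_le w
  exact le_antisymm h4 (by have h5 := hvlen.eq; rw [← hvprod] at h5; omega)


/-- In the affine Coxeter group defined by this matrix, every word with the intervening
neighbours property is reduced. -/
theorem intervening_neighbours_reduced_CoxeterMatrixAffineG2 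
    (w : List (Fin 3)) (hw : HasInterveningNeighbours (CoxeterMatrixAffineG2) w) :
    (CoxeterMatrixAffineG2).toCoxeterSystem.IsReduced w := by
  exact INP_isReduced hw
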